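/- Let P be the path on vertices 0,...,n with weight w and waterfall list L such that |L(i)| ≥ w(i) + w(i+1) for all 1 ≤ i ≤ n−1 and |L(n)| ≥ w(n). Then P is (L,w)-colorable if and only if for every j ∈ {0,...,n}, |⋃_{k=0}^{j} L(k)| ≥ Σ_{k=0}^{j} w(k). -/

import Mathlib

/-- Selection lemma: pick an `m`-subset of `A` preferring elements outside `B`. -/
lemma select_avoid (A B : Finset ℕ) (m : ℕ) (hm : m ≤ A.card) :
    ∃ S : Finset ℕ, S ⊆ A ∧ S.card = m ∧
      (S ∩ B).card + (A \ B).card ≤ max m (A \ B).card := by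
  obtain ⟨T, hTA, hTcard⟩ :=
    Finset.exists_subset_card_eq (s := A \ B) (n := min m (A \ B).card) (min_le_right _ _)
  obtain ⟨S, hTS, hSA, hScard⟩ :=
    Finset.exists_subsuperset_card_eq (hTA.trans Finset.sdiff_subset)
      (by rw [hTcard]; exact min_le_left _ _) hm
  refine ⟨S, hSA, hScard, ?_⟩
  have hsub : S ∩ B ⊆ S \ T := by
    intro x hx
    rw [Finset.mem_inter] at hx
    rw [Finset.mem_sdiff]
    exact ⟨hx.1, fun hxT => (Finset.mem_sdiff.mp (hTA hxT)).2 hx.2⟩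
  have h1 : (S ∩ B).card ≤ S.card - T.card :=
    le_trans (Finset.card_le_card hsub) (le_of_eq (Finset.card_sdiff_of_subset hTS))
  have hm1 : m ≤ max m (A \ B).card := le_max_left _ _
  have hm2 : (A \ B).card ≤ max m (A \ B).card := le_max_right _ _
  rcases le_total m (A \ B).card with h | h
  · have hmin : min m (A \ B).card = m := min_eq_left h
    omega
  · have hmin : min m (A \ B).card = (A \ B).card := min_eq_right h
    omega

/-- Corollary: for a good waterfall list with `|L n| ≥ w n`, colorability is equivalent
to the amplitude condition on initial segments only. -/
theorem good_waterfall_path_colorable_iff (n : ℕ) (L : ℕ → Finset ℕ) (w : ℕ → ℕ)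
    (hwf : ∀ i j, i ≤ n → j ≤ n → i + 2 ≤ j → Disjoint (L i) (L j))
    (hgood : ∀ i, 1 ≤ i → i ≤ n - 1 → w i + w (i + 1) ≤ (L i).card)
    (hn : w n ≤ (L n).card) :
    (∃ c : ℕ → Finset ℕ, (∀ i, i ≤ n → c i ⊆ L i ∧ (c i).card = w i) ∧
        ∀ i, i < n → Disjoint (c i) (c (i + 1))) ↔
      (∀ j, j ≤ n →
        ∑ k ∈ Finset.Icc 0 j, w k ≤ ((Finset.Icc 0 j).biUnion L).card) := by
  constructor
  · rintro ⟨c, hc1, hc2⟩ j hj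
    have key : ∀ x y, x ≤ n → y ≤ n → x < y → Disjoint (c x) (c y) := by
      intro x y hx hy hxy
      rcases eq_or_lt_of_le (Nat.succ_le_of_lt hxy) with h | h
      · rw [← h]; exact hc2 x (by omega)
      · exact ((hwf x y hx hy (by omega)).mono (hc1 x hx).1 (hc1 y hy).1)
    calc ∑ k ∈ Finset.Icc 0 j, w k
        = ∑ k ∈ Finset.Icc 0 j, (c k).card := by
          refine Finset.sum_congr rfl fun k hk => ?_
          exact ((hc1 k (le_trans (Finset.mem_Icc.mp hk).2 hj)).2).symm
      _ = ((Finset.Icc 0 j).biUnion c).card := by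
          refine (Finset.card_biUnion ?_).symm
          intro x hx y hy hxy
          rw [Finset.mem_coe, Finset.mem_Icc] at hx hy
          rcases lt_or_gt_of_ne hxy with h | h
          · exact key x y (by omega) (by omega) h
          · exact (key y x (by omega) (by omega) h).symm
      _ ≤ ((Finset.Icc 0 j).biUnion L).card := by
          refine Finset.card_le_card (Finset.biUnion_subset.mpr fun x hx => ?_)
          have hx' := Finset.mem_Icc.mp hx
          exact (hc1 x (by omega)).1.trans (Finset.subset_biUnion_of_mem L hx)
  · intro hamp
    -- union recursion
    have hU : ∀ k, k + 1 ≤ n →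
        ((Finset.Icc 0 (k+1)).biUnion L).card
          = ((Finset.Icc 0 k).biUnion L).card + (L (k+1) \ L k).card := by
      intro k hk
      have hins : Finset.Icc 0 (k+1) = insert (k+1) (Finset.Icc 0 k) := by
        ext x; simp only [Finset.mem_Icc, Finset.mem_insert]; omega
      rw [hins, Finset.biUnion_insert]
      have hdiff : L (k+1) \ (Finset.Icc 0 k).biUnion L = L (k+1) \ L k := by
        ext x
        simp only [Finset.mem_sdiff, Finset.mem_biUnion, Finset.mem_Icc]
        constructor
        · rintro ⟨hx, hnx⟩
          exact ⟨hx, fun hxk => hnx ⟨k, ⟨Nat.zero_le _, le_rfl⟩, hxk⟩⟩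
        · rintro ⟨hx, hnx⟩
          refine ⟨hx, ?_⟩
          rintro ⟨i, ⟨-, hik⟩, hxi⟩
          rcases eq_or_lt_of_le hik with rfl | hlt
          · exact hnx hxi
          · exact Finset.disjoint_left.mp (hwf i (k+1) (by omega) hk (by omega)) hxi hx
      have hcard := Finset.card_sdiff_add_card (L (k+1)) ((Finset.Icc 0 k).biUnion L)
      rw [hdiff] at hcard
      omega
    have main : ∀ d j, j + d = n + 1 → ∃ c : ℕ → Finset ℕ,
        (∀ i, j ≤ i → i ≤ n → c i ⊆ L i ∧ (c i).card = w i) ∧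
        (∀ i, j ≤ i → i < n → Disjoint (c i) (c (i+1))) ∧
        (∀ i, n < i → c i = ∅) ∧
        (∀ k, k + 1 = j →
          (∑ x ∈ Finset.Icc 0 k, w x) + (c j ∩ L k).card
            ≤ ((Finset.Icc 0 k).biUnion L).card) := by
      intro d
      induction d with
      | zero =>
        intro j hj
        have hj' : j = n + 1 := by omega
        subst hj'
        refine ⟨fun _ => ∅, ?_, ?_, fun _ _ => rfl, ?_⟩
        · intro i h1 h2; exact absurd h2 (by omega)
        · intro i h1 h2; exact absurd h2 (by omega)
        · intro k hk
          simpa using hamp k (by omega)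
      | succ d ih =>
        intro j hj
        have hjn : j ≤ n := by omega
        obtain ⟨c', hc'1, hc'2, hc'3, hc'4⟩ := ih (j+1) (by omega)
        have inv : (∑ x ∈ Finset.Icc 0 j, w x) + (c' (j+1) ∩ L j).card
            ≤ ((Finset.Icc 0 j).biUnion L).card := hc'4 j rfl
        -- feasibility
        have hsd : (L j \ c' (j+1)).card + (L j ∩ c' (j+1)).card = (L j).card :=
          Finset.card_sdiff_add_card_inter _ _
        have hint : (L j ∩ c' (j+1)).card = (c' (j+1) ∩ L j).card := by
          rw [Finset.inter_comm]
        have hfeas : w j ≤ (L j \ c' (j+1)).card := by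
          by_cases hj0 : j = n
          · have hz : c' (j+1) = ∅ := hc'3 (j+1) (by omega)
            rw [hz, Finset.sdiff_empty, hj0]
            exact hn
          · by_cases hj1 : j = 0
            · subst hj1
              have hU0 : ((Finset.Icc 0 0).biUnion L).card = (L 0).card := by simp
              have hs0 : ∑ x ∈ Finset.Icc 0 0, w x = w 0 := by simp
              omega
            · have ht' : (c' (j+1) ∩ L j).card ≤ w (j+1) := by
                have hcc := (hc'1 (j+1) le_rfl (by omega)).2
                calc (c' (j+1) ∩ L j).card ≤ (c' (j+1)).card :=
                      Finset.card_le_card Finset.inter_subset_left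
                  _ = w (j+1) := hcc
              have hg := hgood j (by omega) (by omega)
              omega
        obtain ⟨S, hSA, hScard, hSbound⟩ :=
          select_avoid (L j \ c' (j+1)) (L (j-1)) (w j) hfeas
        refine ⟨Function.update c' j S, ?_, ?_, ?_, ?_⟩
        · intro i h1 h2
          by_cases hij : i = j
          · subst hij
            rw [Function.update_self]
            exact ⟨hSA.trans Finset.sdiff_subset, hScard⟩
          · rw [Function.update_of_ne hij]
            exact hc'1 i (by omega) h2
        · intro i h1 h2
          by_cases hij : i = j
          · subst hij
            rw [Function.update_self, Function.update_of_ne (by omega : i + 1 ≠ i)]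
            exact Finset.disjoint_left.mpr fun {x} hx hx2 =>
              (Finset.mem_sdiff.mp (hSA hx)).2 hx2
          · rw [Function.update_of_ne hij, Function.update_of_ne (by omega : i + 1 ≠ j)]
            exact hc'2 i (by omega) h2
        · intro i hi
          rw [Function.update_of_ne (by omega : i ≠ j)]
          exact hc'3 i hi
        · intro k hk
          subst hk
          rw [Function.update_self]
          have hk1 : k + 1 - 1 = k := by omega
          rw [hk1] at hSbound
          -- abbreviations
          have f3 := hU k (by omega)
          have f5 : ∑ x ∈ Finset.Icc 0 (k+1), w x = (∑ x ∈ Finset.Icc 0 k, w x) + w (k+1) := by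
            rw [Finset.sum_Icc_succ_top (Nat.zero_le _)]
          have hWU : ∑ x ∈ Finset.Icc 0 k, w x ≤ ((Finset.Icc 0 k).biUnion L).card :=
            hamp k (by omega)
          -- f2 : |L(k+1) \ L k| ≤ |A \ L k| + t'
          have e1 : (L (k+1) \ c' (k+1+1)) \ L k = (L (k+1) \ L k) \ c' (k+1+1) := by
            ext x
            simp only [Finset.mem_sdiff]
            tauto
          have e2 : ((L (k+1) \ L k) ∩ c' (k+1+1)).card
              + ((L (k+1) \ L k) \ c' (k+1+1)).card = (L (k+1) \ L k).card :=
            Finset.card_inter_add_card_sdiff _ _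
          have e3 : ((L (k+1) \ L k) ∩ c' (k+1+1)).card ≤ (c' (k+1+1) ∩ L (k+1)).card := by
            refine Finset.card_le_card ?_
            intro x hx
            rw [Finset.mem_inter] at hx ⊢
            exact ⟨hx.2, (Finset.mem_sdiff.mp hx.1).1⟩
          rw [e1] at hSbound
          rcases le_total (w (k+1)) (((L (k+1) \ L k) \ c' (k+1+1)).card) with h | h
          · rw [max_eq_right h] at hSbound
            omega
          · rw [max_eq_left h] at hSbound
            omega
    obtain ⟨c, hc1, hc2, -, -⟩ := main (n+1) 0 (by omega)
    exact ⟨c, fun i hi => hc1 i (Nat.zero_le _) hi, fun i hi => hc2 i (Nat.zero_le _) hi⟩
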